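/- There exists a constant C > 0 such that for every real x > 0 and every real t with 0 < t ≤ e^{-x²/2}, one has x · (-log(1-t))/t ≤ C · max(1, x). (Equivalently, writing G'(t) = -log(1-t)/(4π² t) for the derivative of G(t) = (1/(4π²)) Σ_{n=1}^∞ tⁿ/n², the quantity x·G'(t) is bounded by (C/(4π²))·max(1,x) whenever 0 < t ≤ e^{-x²/2}.) -/

import Mathlib

/-- there exists `C > 0` such that for all `x > 0` and
`0 < t ≤ e^{-x²/2}`, one has `x · (-log(1-t))/t ≤ C · max(1,x)`. -/
theorem stmt_4 :
    ∃ C : ℝ, 0 < C ∧ ∀ x : ℝ, 0 < x → ∀ t : ℝ, 0 < t → t ≤ Real.exp (-x ^ 2 / 2) →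
      x * (-Real.log (1 - t)) / t ≤ C * max 1 x := by
  refine ⟨10, by norm_num, fun x hx t ht hte => ?_⟩
  have ht1 : t < 1 := lt_of_le_of_lt hte (by
    rw [Real.exp_lt_one_iff]; nlinarith [sq_nonneg x])
  have h1t : 0 < 1 - t := by linarith
  have hmax : (1:ℝ) ≤ max 1 x := le_max_left _ _
  have hlognn : 0 ≤ -Real.log (1 - t) := by
    have : Real.log (1 - t) ≤ 0 := Real.log_nonpos (by linarith) (by linarith)
    linarith
  by_cases hhalf : t ≤ 1/2
  · -- here -log(1-t) ≤ t/(1-t) ≤ 2t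
    have hlog : -Real.log (1 - t) ≤ t / (1 - t) := by
      have h := Real.log_le_sub_one_of_pos (show (0:ℝ) < (1-t)⁻¹ by positivity)
      rw [Real.log_inv] at h
      calc -Real.log (1-t) ≤ (1-t)⁻¹ - 1 := h
        _ = t / (1-t) := by field_simp; ring
    have h2 : t / (1 - t) ≤ 2 * t := by
      rw [div_le_iff₀ h1t]; nlinarith
    rw [div_le_iff₀ ht]
    have hmx : x ≤ max 1 x := le_max_right _ _
    calc x * (-Real.log (1-t)) ≤ x * (2*t) := by nlinarith [hlog.trans h2]
      _ = 2 * x * t := by ring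
      _ ≤ 10 * max 1 x * t := by nlinarith
  · push_neg at hhalf
    -- x is small: x² < 2
    have hx2 : x^2 < 2 := by
      by_contra hc
      push_neg at hc
      have h1 : Real.exp (-x^2/2) ≤ Real.exp (-1) := by
        apply Real.exp_le_exp.2; linarith
      have h2 : Real.exp (-1) < 1/2 := by
        rw [Real.exp_neg]
        have := Real.exp_one_gt_d9
        rw [inv_lt_comm₀ (by positivity) (by norm_num)]
        linarith
      linarith
    set s := x^2/2 with hs
    have hspos : 0 < s := by positivity
    -- 1 - exp(-s) ≥ s * exp(-s)
    have hkey : s * Real.exp (-s) ≤ 1 - Real.exp (-s) := by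
      rw [Real.exp_neg]
      have h := Real.add_one_le_exp s
      have hp := Real.exp_pos s
      have hinv : (Real.exp s)⁻¹ * Real.exp s = 1 := inv_mul_cancel₀ hp.ne'
      have hinvpos : 0 < (Real.exp s)⁻¹ := by positivity
      nlinarith
    have h1t' : s * Real.exp (-s) ≤ 1 - t := by
      have hts : t ≤ Real.exp (-s) := by
        rw [hs]; convert hte using 2; ring
      linarith
    have hsexp : 0 < s * Real.exp (-s) := by positivity
    have hlog1 : Real.log (s * Real.exp (-s)) ≤ Real.log (1 - t) :=
      Real.log_le_log hsexp h1t'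
    have hlog2 : Real.log (s * Real.exp (-s)) = Real.log s - s := by
      rw [Real.log_mul hspos.ne' (Real.exp_pos _).ne', Real.log_exp]; ring
    have hbound : -Real.log (1 - t) ≤ s - Real.log s := by
      rw [hlog2] at hlog1; linarith
    have hlogs : Real.log s = 2 * Real.log x - Real.log 2 := by
      rw [hs, Real.log_div (by positivity) (by norm_num), Real.log_pow]
      push_cast; ring
    -- x * log x ≥ x - 1
    have hxlog : x - 1 ≤ x * Real.log x := by
      have h := Real.log_le_sub_one_of_pos (show (0:ℝ) < x⁻¹ by positivity)
      rw [Real.log_inv] at h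
      have h2 : x * (-Real.log x) ≤ x * (x⁻¹ - 1) :=
        mul_le_mul_of_nonneg_left h hx.le
      have h3 : x * x⁻¹ = 1 := mul_inv_cancel₀ hx.ne'
      nlinarith
    have hl2 : Real.log 2 < 0.7 := by
      have := Real.log_two_lt_d9; linarith
    have hl2pos : 0 < Real.log 2 := Real.log_pos (by norm_num)
    -- x * (-log(1-t)) ≤ 5
    have hmain : x * (-Real.log (1 - t)) ≤ 5 := by
      have h1 : x * (-Real.log (1-t)) ≤ x * (s - Real.log s) :=
        mul_le_mul_of_nonneg_left hbound hx.le
      have h2 : x * (s - Real.log s) = x^3/2 - 2*(x*Real.log x) + x*Real.log 2 := by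
        rw [hlogs, hs]; ring
      have hx32 : x^3 ≤ 2*x := by nlinarith
      have hxl2 : x * Real.log 2 ≤ 0.7 * x := by nlinarith
      nlinarith
    rw [div_le_iff₀ ht]
    calc x * (-Real.log (1-t)) ≤ 5 := hmain
      _ ≤ 10 * max 1 x * t := by nlinarith
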